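/- Let g = ℝ^n and let v_1,...,v_k be part of a ℤ-basis of ℤ^n (primitive lattice vectors, linearly independent). Let ε, ε' ∈ (ℝ^n)* and suppose the cones C = {η : ⟨η - ε, v_i⟩ ≥ 0 for all i} and C' = {η : ⟨η - ε', w_j⟩ ≥ 0 for all j} are equal, where w_1,...,w_m are also linearly independent primitive lattice vectors. Then k = m, the sets {v_1,...,v_k} and {w_1,...,w_m} are equal, and ⟨ε, v_i⟩ = ⟨ε', v_i⟩ for all i. -/

import Mathlib

/-- The pairing between `η ∈ (ℝⁿ)*` (written in coordinates) and a lattice vector `v ∈ ℤⁿ`. -/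
def pairR {n : ℕ} (η : Fin n → ℝ) (v : Fin n → ℤ) : ℝ := ∑ j, η j * (v j : ℝ)

/-- A lattice vector is primitive: it is nonzero and not a nontrivial integer multiple
of another lattice vector. -/
def IsPrimitiveVec {n : ℕ} (v : Fin n → ℤ) : Prop :=
  v ≠ 0 ∧ ∀ (d : ℤ) (w : Fin n → ℤ), v = d • w → IsUnit d

lemma pairR_sub {n : ℕ} (x y : Fin n → ℝ) (v : Fin n → ℤ) :
    pairR (x - y) v = pairR x v - pairR y v := by
  simp [pairR, sub_mul, Finset.sum_sub_distrib]

lemma pairR_add_smul {n : ℕ} (x y : Fin n → ℝ) (t : ℝ) (v : Fin n → ℤ) :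
    pairR (x + t • y) v = pairR x v + t * pairR y v := by
  simp [pairR, add_mul, Finset.sum_add_distrib, Finset.mul_sum, mul_assoc]

/-- two primitive integer vectors that are positive real multiples of each other are equal -/
lemma prim_unique {n : ℕ} {a b : Fin n → ℤ} (ha : IsPrimitiveVec a) (hb : IsPrimitiveVec b)
    {c : ℝ} (hc : 0 < c) (h : ∀ t, (a t : ℝ) = c * (b t : ℝ)) : a = b := by
  obtain ⟨t0, ht0⟩ : ∃ t0, b t0 ≠ 0 := by
    by_contra hcon
    push_neg at hcon
    exact hb.1 (funext hcon)
  -- integer proportionality: a t * b t0 = a t0 * b t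
  have key : ∀ t, a t * b t0 = a t0 * b t := by
    intro t
    have : (a t : ℝ) * (b t0 : ℝ) = (a t0 : ℝ) * (b t : ℝ) := by
      rw [h t, h t0]; ring
    exact_mod_cast this
  set p : ℤ := a t0 with hp
  set q : ℤ := b t0 with hq
  have hcpq : (p : ℝ) = c * q := h t0
  have hpne : p ≠ 0 := by
    intro h0
    rw [h0] at hcpq
    have : (q : ℝ) ≠ 0 := Int.cast_ne_zero.mpr ht0
    simp at hcpq
    rcases hcpq with h1 | h1
    · exact absurd h1 (ne_of_gt hc)
    · exact ht0 h1
  have hg : 0 < Int.gcd p q := Int.gcd_pos_of_ne_zero_left q hpne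
  set g : ℤ := (Int.gcd p q : ℤ) with hgdef
  have hgne : g ≠ 0 := by simp only [hgdef]; exact_mod_cast hg.ne'
  set p' : ℤ := p / g with hp'
  set q' : ℤ := q / g with hq'
  have hpg : g * p' = p := Int.mul_ediv_cancel' (Int.gcd_dvd_left p q)
  have hqg : g * q' = q := Int.mul_ediv_cancel' (Int.gcd_dvd_right p q)
  have hcop : IsCoprime p' q' := by
    rw [Int.isCoprime_iff_gcd_eq_one]
    exact Int.gcd_div_gcd_div_gcd hg
  have key' : ∀ t, a t * q' = p' * b t := by
    intro t
    have : g * (a t * q') = g * (p' * b t) := by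
      have := key t
      rw [← hpg, ← hqg] at this
      ring_nf at this ⊢
      linarith [this]
    exact mul_left_cancel₀ hgne this
  -- q' divides every b t
  have hq'dvd : ∀ t, q' ∣ b t := by
    intro t
    have : q' ∣ p' * b t := ⟨a t, by rw [← key' t]; ring⟩
    exact (hcop.symm.dvd_of_dvd_mul_left this)
  have hp'dvd : ∀ t, p' ∣ a t := by
    intro t
    have : p' ∣ a t * q' := ⟨b t, key' t⟩
    exact (hcop.dvd_of_dvd_mul_right this)
  have huq : IsUnit q' := by
    apply hb.2 q' (fun t => b t / q')
    funext t
    simp only [Pi.smul_apply, smul_eq_mul]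
    exact (Int.mul_ediv_cancel' (hq'dvd t)).symm
  have hup : IsUnit p' := by
    apply ha.2 p' (fun t => a t / p')
    funext t
    simp only [Pi.smul_apply, smul_eq_mul]
    exact (Int.mul_ediv_cancel' (hp'dvd t)).symm
  -- signs
  have habt : ∀ t, a t * q' = p' * b t := key'
  rcases Int.isUnit_iff.mp huq with h1 | h1 <;> rcases Int.isUnit_iff.mp hup with h2 | h2
  · funext t; have := key' t; rw [h1, h2] at this; omega
  · -- q' = 1, p' = -1 : a = -b, contradiction with c > 0
    exfalso
    have hab : ∀ t, a t = - b t := by intro t; have := key' t; rw [h1, h2] at this; omega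
    have : (a t0 : ℝ) = - (b t0 : ℝ) := by exact_mod_cast congrArg Int.cast (hab t0)
    rw [h t0] at this
    have hbne : (b t0 : ℝ) ≠ 0 := Int.cast_ne_zero.mpr ht0
    have : c = -1 := by
      rcases mul_eq_mul_right_iff.mp (by linarith [this] : c * (b t0:ℝ) = (-1) * (b t0:ℝ)) with h3 | h3
      · exact h3
      · exact absurd h3 hbne
    linarith
  · -- q' = -1, p' = 1 : a = -b again
    exfalso
    have hab : ∀ t, a t = - b t := by intro t; have := key' t; rw [h1, h2] at this; omega
    have : (a t0 : ℝ) = - (b t0 : ℝ) := by exact_mod_cast congrArg Int.cast (hab t0)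
    rw [h t0] at this
    have hbne : (b t0 : ℝ) ≠ 0 := Int.cast_ne_zero.mpr ht0
    have : c = -1 := by
      rcases mul_eq_mul_right_iff.mp (by linarith [this] : c * (b t0:ℝ) = (-1) * (b t0:ℝ)) with h3 | h3
      · exact h3
      · exact absurd h3 hbne
    linarith
  · funext t; have := key' t; rw [h1, h2] at this; omega

/-- recession cone direction: if the cones agree then a direction nonneg on all `v i`
is nonneg on all `w j`. -/
lemma recession_le {n k m : ℕ} (v : Fin k → (Fin n → ℤ)) (w : Fin m → (Fin n → ℤ))
    (ε ε' : Fin n → ℝ)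
    (hC : {η : Fin n → ℝ | ∀ i, 0 ≤ pairR (η - ε) (v i)} ⊆
          {η : Fin n → ℝ | ∀ j, 0 ≤ pairR (η - ε') (w j)})
    (η : Fin n → ℝ) (hη : ∀ i, 0 ≤ pairR η (v i)) : ∀ j, 0 ≤ pairR η (w j) := by
  intro j
  by_contra hneg
  push_neg at hneg
  set A : ℝ := pairR (ε - ε') (w j) with hA
  set t : ℝ := (|A| + 1) / (-pairR η (w j)) with ht
  have htpos : 0 < t := div_pos (by positivity) (by linarith)
  have hmem : (ε + t • η) ∈ {η : Fin n → ℝ | ∀ i, 0 ≤ pairR (η - ε) (v i)} := by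
    intro i
    have : ε + t • η - ε = t • η := by abel
    rw [this]
    have h0 : pairR (0 + t • η) (v i) = pairR (0:Fin n → ℝ) (v i) + t * pairR η (v i) :=
      pairR_add_smul 0 η t (v i)
    simp only [zero_add] at h0
    have h00 : pairR (0 : Fin n → ℝ) (v i) = 0 := by simp [pairR]
    rw [h0, h00, zero_add]
    exact mul_nonneg htpos.le (hη i)
  have h2 := hC hmem j
  have hexp : pairR (ε + t • η - ε') (w j) = A + t * pairR η (w j) := by
    have : ε + t • η - ε' = (ε - ε') + t • η := by abel
    rw [this, pairR_add_smul]
  rw [hexp] at h2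
  have hne : pairR η (w j) ≠ 0 := ne_of_lt hneg
  have : t * pairR η (w j) = -(|A| + 1) := by
    rw [ht, div_mul_eq_mul_div, mul_comm, ← div_mul_eq_mul_div,
      div_neg, div_self hne, neg_one_mul]
  rw [this] at h2
  have := abs_nonneg A
  have := le_abs_self A
  linarith

noncomputable section

open Finset RealInnerProductSpace

def toE {n : ℕ} (x : Fin n → ℝ) : EuclideanSpace ℝ (Fin n) := (WithLp.equiv 2 _).symm x

lemma toE_apply {n : ℕ} (x : Fin n → ℝ) (j : Fin n) : toE x j = x j := rfl

lemma inner_eq_sum {n : ℕ} (x y : EuclideanSpace ℝ (Fin n)) :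
    ⟪x, y⟫ = ∑ j, x j * y j := by
  simp [PiLp.inner_apply, RCLike.inner_apply, conj_trivial, mul_comm]

lemma pairR_eq_inner {n : ℕ} (η : Fin n → ℝ) (v : Fin n → ℤ) :
    pairR η v = ⟪toE η, toE (fun j => (v j : ℝ))⟫ := by
  rw [inner_eq_sum]; rfl

lemma apply_eq_sum {n : ℕ} (f : EuclideanSpace ℝ (Fin n) →ₗ[ℝ] ℝ)
    (x : EuclideanSpace ℝ (Fin n)) :
    f x = ∑ j, x j * f (EuclideanSpace.single j 1) := by
  conv_lhs => rw [← (EuclideanSpace.basisFun (Fin n) ℝ).sum_repr x]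
  rw [map_sum]
  refine Finset.sum_congr rfl fun j _ => ?_
  rw [map_smul, EuclideanSpace.basisFun_apply, EuclideanSpace.basisFun_repr, smul_eq_mul]

/-- dual vectors to a linearly independent family of lattice vectors -/
lemma exists_dual {n k : ℕ} (v : Fin k → (Fin n → ℤ))
    (hv : LinearIndependent ℝ (fun i => fun j => ((v i j : ℝ)))) (i : Fin k) :
    ∃ η : Fin n → ℝ, ∀ l, pairR η (v l) = if l = i then 1 else 0 := by
  set VE : Fin k → EuclideanSpace ℝ (Fin n) := fun i => toE (fun j => (v i j : ℝ)) with hVE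
  have hVEli : LinearIndependent ℝ VE := by
    have := hv.map' (WithLp.linearEquiv 2 ℝ (Fin n → ℝ)).symm.toLinearMap
      (LinearEquiv.ker _)
    exact this
  set K : Submodule ℝ (EuclideanSpace ℝ (Fin n)) := Submodule.span ℝ (Set.range VE) with hK
  set B : Module.Basis (Fin k) ℝ K := Module.Basis.span hVEli with hB
  set f : EuclideanSpace ℝ (Fin n) →ₗ[ℝ] ℝ :=
    (B.coord i) ∘ₗ (K.orthogonalProjection).toLinearMap with hf
  refine ⟨fun j => f (EuclideanSpace.single j 1), fun l => ?_⟩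
  have hfeq : pairR (fun j => f (EuclideanSpace.single j 1)) (v l) = f (VE l) := by
    rw [apply_eq_sum f (VE l)]
    simp only [pairR]
    exact Finset.sum_congr rfl fun j _ => by rw [mul_comm]; rfl
  rw [hfeq]
  have hmem : VE l ∈ K := Submodule.subset_span (Set.mem_range_self l)
  have hBl : (B l : EuclideanSpace ℝ (Fin n)) = VE l := congrArg Subtype.val (Module.Basis.span_apply hVEli l)
  have : f (VE l) = B.coord i (K.orthogonalProjection (VE l)) := rfl
  rw [this, ← hBl, Submodule.orthogonalProjection_mem_subspace_eq_self (B l)]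
  rw [Module.Basis.coord_apply, Module.Basis.repr_self]
  simp [Finsupp.single_apply]

/-- if `z` is orthogonal to everything orthogonal to all `v i`, then `z` is a real
combination of the `v i` -/
lemma mem_span_perp {n k : ℕ} (v : Fin k → (Fin n → ℤ)) (z : Fin n → ℤ)
    (h : ∀ η : Fin n → ℝ, (∀ i, pairR η (v i) = 0) → pairR η z = 0) :
    ∃ c : Fin k → ℝ, ∀ t, (z t : ℝ) = ∑ i, c i * (v i t : ℝ) := by
  set VE : Fin k → EuclideanSpace ℝ (Fin n) := fun i => toE (fun j => (v i j : ℝ)) with hVE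
  set ZE : EuclideanSpace ℝ (Fin n) := toE (fun j => (z j : ℝ)) with hZE
  set K : Submodule ℝ (EuclideanSpace ℝ (Fin n)) := Submodule.span ℝ (Set.range VE) with hK
  have hZK : ZE ∈ K := by
    rw [← Submodule.orthogonal_orthogonal K]
    rw [Submodule.mem_orthogonal]
    intro u hu
    have hη : ∀ i, pairR ((WithLp.equiv 2 _) u) (v i) = 0 := by
      intro i
      rw [pairR_eq_inner]
      have : toE ((WithLp.equiv 2 (Fin n → ℝ)) u) = u := rfl
      rw [this]
      have := (Submodule.mem_orthogonal K u).mp hu (VE i) (Submodule.subset_span (Set.mem_range_self i))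
      rw [real_inner_comm] at this
      exact this
    have := h _ hη
    rw [pairR_eq_inner] at this
    have heq : toE ((WithLp.equiv 2 (Fin n → ℝ)) u) = u := rfl
    rw [heq] at this
    exact this
  rw [hK, Submodule.mem_span_range_iff_exists_fun] at hZK
  obtain ⟨c, hc⟩ := hZK
  refine ⟨c, fun t => ?_⟩
  have hmap : (fun j => (z j : ℝ)) = ∑ i, c i • (fun j => (v i j : ℝ)) := by
    have h1 := congrArg (WithLp.linearEquiv 2 ℝ (Fin n → ℝ)) hc
    rw [map_sum] at h1
    simp only [map_smul] at h1
    exact h1.symm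
  have := congrFun hmap t
  rw [Finset.sum_apply] at this
  simpa using this


section Helpers

variable {n : ℕ}

/-- pairR of a real-linear combination of lattice vectors. -/
lemma pairR_of_comb0 {k : ℕ} (η : Fin n → ℝ) (v : Fin k → (Fin n → ℤ)) (z : Fin n → ℤ)
    (c : Fin k → ℝ) (hz : ∀ t, (z t : ℝ) = ∑ i, c i * (v i t : ℝ)) :
    (∑ j, η j * (z j : ℝ)) = ∑ i, c i * ∑ j, η j * (v i j : ℝ) := by
  calc (∑ t, η t * (z t : ℝ)) = ∑ t, ∑ i, c i * (η t * (v i t : ℝ)) := by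
        refine Finset.sum_congr rfl fun t _ => ?_
        rw [hz t, Finset.mul_sum]
        refine Finset.sum_congr rfl fun i _ => by ring
    _ = ∑ i, ∑ t, c i * (η t * (v i t : ℝ)) := Finset.sum_comm
    _ = ∑ i, c i * ∑ t, η t * (v i t : ℝ) := by
        refine Finset.sum_congr rfl fun i _ => ?_
        rw [Finset.mul_sum]

/-- the monomial-matrix selection lemma. -/
lemma pick_index {k m : ℕ} (c : Fin m → Fin k → ℝ) (d : Fin k → Fin m → ℝ)
    (hcnn : ∀ j i, 0 ≤ c j i) (hdnn : ∀ i j, 0 ≤ d i j)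
    (hdc : ∀ i l, ∑ j, d i j * c j l = if i = l then 1 else 0)
    (hcd : ∀ j j', ∑ i, c j i * d i j' = if j = j' then 1 else 0)
    (j : Fin m) : ∃ i, 0 < c j i ∧ ∀ l, l ≠ i → c j l = 0 := by
  have h1 : ∑ i, c j i * d i j = 1 := by simpa using hcd j j
  have hex : ∃ i, c j i * d i j ≠ 0 := by
    by_contra hcon
    push_neg at hcon
    rw [Finset.sum_eq_zero (fun i _ => hcon i)] at h1
    norm_num at h1
  obtain ⟨i, hi⟩ := hex
  obtain ⟨hci, hdi⟩ := mul_ne_zero_iff.mp hi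
  have hcpos : 0 < c j i := lt_of_le_of_ne (hcnn j i) (Ne.symm hci)
  have hdpos : 0 < d i j := lt_of_le_of_ne (hdnn i j) (Ne.symm hdi)
  refine ⟨i, hcpos, fun l hl => ?_⟩
  have h0 : ∑ j', d i j' * c j' l = 0 := by
    rw [hdc i l, if_neg (Ne.symm hl)]
  have hterm : d i j * c j l = 0 := by
    have := (Finset.sum_eq_zero_iff_of_nonneg
      (fun j' _ => mul_nonneg (hdnn i j') (hcnn j' l))).mp h0 j (Finset.mem_univ j)
    exact this
  rcases mul_eq_zero.mp hterm with h | h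
  · exact absurd h hdpos.ne'
  · exact h

end Helpers


/-- a unimodular cone in `(ℝⁿ)*` determines its defining data: if the cones
defined by `(v, ε)` and `(w, ε')` coincide (with the `vᵢ`, resp. `wⱼ`, linearly independent
primitive lattice vectors), then `k = m`, `{v₁,...,v_k} = {w₁,...,w_m}`, and
`⟨ε, vᵢ⟩ = ⟨ε', vᵢ⟩` for all `i`. -/
theorem stmt_2 {n k m : ℕ}
    (v : Fin k → (Fin n → ℤ)) (w : Fin m → (Fin n → ℤ))
    (hv : LinearIndependent ℝ (fun i => fun j => ((v i j : ℝ))))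
    (hw : LinearIndependent ℝ (fun i => fun j => ((w i j : ℝ))))
    (hvprim : ∀ i, IsPrimitiveVec (v i)) (hwprim : ∀ i, IsPrimitiveVec (w i))
    (ε ε' : Fin n → ℝ)
    (hC : {η : Fin n → ℝ | ∀ i, 0 ≤ pairR (η - ε) (v i)} =
          {η : Fin n → ℝ | ∀ j, 0 ≤ pairR (η - ε') (w j)}) :
    k = m ∧ Set.range v = Set.range w ∧ ∀ i, pairR ε (v i) = pairR ε' (v i) := by
  classical
  have pairR_neg : ∀ (x : Fin n → ℝ) (u : Fin n → ℤ), pairR (-x) u = - pairR x u := by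
    intro x u; simp [pairR, Finset.sum_neg_distrib]
  -- recession cone directions agree
  have hD1 : ∀ η : Fin n → ℝ, (∀ i, 0 ≤ pairR η (v i)) → ∀ j, 0 ≤ pairR η (w j) :=
    recession_le v w ε ε' hC.subset
  have hD2 : ∀ η : Fin n → ℝ, (∀ j, 0 ≤ pairR η (w j)) → ∀ i, 0 ≤ pairR η (v i) :=
    recession_le w v ε' ε hC.symm.subset
  -- each w j is a real combination of the v i, and vice versa
  have hwspan : ∀ j, ∃ c : Fin k → ℝ, ∀ t, (w j t : ℝ) = ∑ i, c i * (v i t : ℝ) := by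
    intro j
    apply mem_span_perp
    intro η hη
    have h1 := hD1 η (fun i => le_of_eq (hη i).symm) j
    have h2 := hD1 (-η) (fun i => by rw [pairR_neg, hη i, neg_zero]) j
    rw [pairR_neg] at h2
    linarith
  have hvspan : ∀ i, ∃ d : Fin m → ℝ, ∀ t, (v i t : ℝ) = ∑ j, d j * (w j t : ℝ) := by
    intro i
    apply mem_span_perp
    intro η hη
    have h1 := hD2 η (fun j => le_of_eq (hη j).symm) i
    have h2 := hD2 (-η) (fun j => by rw [pairR_neg, hη j, neg_zero]) i
    rw [pairR_neg] at h2
    linarith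
  choose c hc using hwspan
  choose d hd using hvspan
  -- dual vectors
  choose η hη using exists_dual v hv
  choose θ hθ using exists_dual w hw
  -- coefficients are values of dual pairings
  have hcval : ∀ j i, pairR (η i) (w j) = c j i := by
    intro j i
    have := pairR_of_comb0 (η i) v (w j) (c j) (hc j)
    rw [show pairR (η i) (w j) = ∑ t, η i t * (w j t : ℝ) from rfl, this]
    have : ∀ l, c j l * (∑ t, η i t * (v l t : ℝ)) = c j l * (if l = i then 1 else 0) := by
      intro l
      rw [show (∑ t, η i t * (v l t : ℝ)) = pairR (η i) (v l) from rfl, hη i l]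
    rw [Finset.sum_congr rfl (fun l _ => this l)]
    simp [Finset.sum_ite_eq']
  have hdval : ∀ i j, pairR (θ j) (v i) = d i j := by
    intro i j
    have := pairR_of_comb0 (θ j) w (v i) (d i) (hd i)
    rw [show pairR (θ j) (v i) = ∑ t, θ j t * (v i t : ℝ) from rfl, this]
    have : ∀ l, d i l * (∑ t, θ j t * (w l t : ℝ)) = d i l * (if l = j then 1 else 0) := by
      intro l
      rw [show (∑ t, θ j t * (w l t : ℝ)) = pairR (θ j) (w l) from rfl, hθ j l]
    rw [Finset.sum_congr rfl (fun l _ => this l)]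
    simp [Finset.sum_ite_eq']
  -- nonnegativity of coefficients
  have hηnn : ∀ i, ∀ l, 0 ≤ pairR (η i) (v l) := by
    intro i l; rw [hη i l]; split_ifs <;> norm_num
  have hθnn : ∀ j, ∀ l, 0 ≤ pairR (θ j) (w l) := by
    intro j l; rw [hθ j l]; split_ifs <;> norm_num
  have hcnn : ∀ j i, 0 ≤ c j i := fun j i => (hcval j i) ▸ hD1 (η i) (hηnn i) j
  have hdnn : ∀ i j, 0 ≤ d i j := fun i j => (hdval i j) ▸ hD2 (θ j) (hθnn j) i
  -- the two coefficient matrices are inverse to each other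
  have hdc : ∀ i l, ∑ j, d i j * c j l = if i = l then 1 else 0 := by
    intro i l
    have h1 := pairR_of_comb0 (η l) w (v i) (d i) (hd i)
    have h2 : pairR (η l) (v i) = ∑ j, d i j * c j l := by
      rw [show pairR (η l) (v i) = ∑ t, η l t * (v i t : ℝ) from rfl, h1]
      exact Finset.sum_congr rfl fun j _ => by
        rw [show (∑ t, η l t * (w j t : ℝ)) = pairR (η l) (w j) from rfl, hcval j l]
    rw [← h2, hη l i]
  have hcd : ∀ j j', ∑ i, c j i * d i j' = if j = j' then 1 else 0 := by
    intro j j'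
    have h1 := pairR_of_comb0 (θ j') v (w j) (c j) (hc j)
    have h2 : pairR (θ j') (w j) = ∑ i, c j i * d i j' := by
      rw [show pairR (θ j') (w j) = ∑ t, θ j' t * (w j t : ℝ) from rfl, h1]
      exact Finset.sum_congr rfl fun i _ => by
        rw [show (∑ t, θ j' t * (v i t : ℝ)) = pairR (θ j') (v i) from rfl, hdval i j']
    rw [← h2, hθ j' j]
  -- each w j equals some v i, and vice versa
  have hwv : ∀ j, ∃ i, w j = v i := by
    intro j
    obtain ⟨i, hcpos, hczero⟩ := pick_index c d hcnn hdnn hdc hcd j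
    refine ⟨i, prim_unique (hwprim j) (hvprim i) hcpos fun t => ?_⟩
    rw [hc j t]
    rw [Finset.sum_eq_single_of_mem i (Finset.mem_univ i)
      (fun l _ hl => by rw [hczero l hl, zero_mul])]
  have hvw : ∀ i, ∃ j, v i = w j := by
    intro i
    obtain ⟨j, hdpos, hdzero⟩ := pick_index d c hdnn hcnn hcd hdc i
    refine ⟨j, prim_unique (hvprim i) (hwprim j) hdpos fun t => ?_⟩
    rw [hd i t]
    rw [Finset.sum_eq_single_of_mem j (Finset.mem_univ j)
      (fun l _ hl => by rw [hdzero l hl, zero_mul])]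
  -- range equality
  have hrange : Set.range v = Set.range w := by
    apply Set.Subset.antisymm
    · rintro x ⟨i, rfl⟩
      obtain ⟨j, hj⟩ := hvw i
      exact ⟨j, hj.symm⟩
    · rintro x ⟨j, rfl⟩
      obtain ⟨i, hi⟩ := hwv j
      exact ⟨i, hi.symm⟩
  -- cardinalities
  have hvinj : Function.Injective v := by
    intro a b hab
    apply hv.injective
    funext j
    simp only [hab]
  have hwinj : Function.Injective w := by
    intro a b hab
    apply hw.injective
    funext j
    simp only [hab]
  have hkm : k = m := by
    have h1 : Nat.card (Set.range v) = k := by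
      rw [Nat.card_range_of_injective hvinj, Nat.card_eq_fintype_card, Fintype.card_fin]
    have h2 : Nat.card (Set.range w) = m := by
      rw [Nat.card_range_of_injective hwinj, Nat.card_eq_fintype_card, Fintype.card_fin]
    rw [← h1, ← h2, hrange]
  refine ⟨hkm, hrange, fun i => ?_⟩
  -- the pairing with ε
  have hε'mem : ε' ∈ {η : Fin n → ℝ | ∀ i, 0 ≤ pairR (η - ε) (v i)} := by
    rw [hC]
    intro j
    rw [sub_self]
    simp [pairR]
  have hεmem : ε ∈ {η : Fin n → ℝ | ∀ j, 0 ≤ pairR (η - ε') (w j)} := by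
    rw [← hC]
    intro i
    rw [sub_self]
    simp [pairR]
  have h1 : 0 ≤ pairR (ε' - ε) (v i) := hε'mem i
  obtain ⟨j, hj⟩ := hvw i
  have h2 : 0 ≤ pairR (ε - ε') (v i) := by rw [hj]; exact hεmem j
  rw [pairR_sub] at h1 h2
  linarith
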